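/- arXiv:1801.05197 — 7 statements merged into one kernel-verified Lean document; each statement's English description precedes it below -/
import Mathlib

section
/- For a positive integer n divisible by 4, the quadruple sum \sum_{j=(n+8)/4}^{n/2} \sum_{i=(n+2)/2-j}^{j-2} \sum_{k=i+1}^{j-1} \sum_{l=j+1}^{n-k} 1 equals n^2(n-2)(n-4)/384. -/
private lemma icc_insert (a c : ℤ) (h : a ≤ c + 1) :
    Finset.Icc a (c + 1) = insert (c + 1) (Finset.Icc a c) := by
  ext x
  simp only [Finset.mem_Icc, Finset.mem_insert]
  omega

private lemma cubicSum (p q r s a b : ℤ) (h : a ≤ b + 1) :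
    12 * ∑ x ∈ Finset.Icc a b, (p + q*x + r*x^2 + s*x^3) =
      12*p*(b+1-a) + 6*q*(b*(b+1)-(a-1)*a)
      + 2*r*(b*(b+1)*(2*b+1)-(a-1)*a*(2*a-1))
      + 3*s*(b^2*(b+1)^2-(a-1)^2*a^2) := by
  obtain ⟨d, hd⟩ : ∃ d : ℕ, b = a - 1 + d := ⟨(b + 1 - a).toNat, by omega⟩
  subst hd
  induction d with
  | zero =>
      rw [show a - 1 + ((0:ℕ):ℤ) = a - 1 by push_cast; ring,
        Finset.Icc_eq_empty (by omega)]
      rw [Finset.sum_empty]; ring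
  | succ d ih =>
      have h' : a ≤ (a - 1 + (d:ℤ)) + 1 := by omega
      rw [show a - 1 + ((d+1:ℕ):ℤ) = (a - 1 + (d:ℤ)) + 1 by push_cast; ring]
      rw [icc_insert _ _ h', Finset.sum_insert (by simp [Finset.mem_Icc]),
        mul_add, ih (by omega)]
      ring

theorem stmt_0 (n : ℤ) (hn : 0 < n) (h4 : 4 ∣ n) :
    (∑ j ∈ Finset.Icc ((n+8)/4) (n/2), ∑ i ∈ Finset.Icc ((n+2)/2 - j) (j-2),
      ∑ k ∈ Finset.Icc (i+1) (j-1), ∑ l ∈ Finset.Icc (j+1) (n-k), (1:ℤ))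
      = n^2*(n-2)*(n-4)/384 := by
  obtain ⟨m, rfl⟩ := h4
  have hm : 1 ≤ m := by omega
  rw [show (4*m+8)/4 = m + 2 by omega, show (4*m)/2 = 2*m by omega]
  -- closed form for the inner triple sum, for each j in range
  have hg : ∀ j ∈ Finset.Icc (m+2) (2*m),
      3 * (∑ i ∈ Finset.Icc ((4*m+2)/2 - j) (j-2),
        ∑ k ∈ Finset.Icc (i+1) (j-1), ∑ l ∈ Finset.Icc (j+1) (4*m-k), (1:ℤ))
      = (10*m + 30*m^2 + 20*m^3) + (-4 - 42*m - 48*m^2)*j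
        + (12 + 36*m)*j^2 + (-8)*j^3 := by
    intro j hj
    rw [Finset.mem_Icc] at hj
    rw [show (4*m+2)/2 = 2*m+1 by omega]
    -- innermost sum over l, then sum over k
    have hh : ∀ i ∈ Finset.Icc (2*m+1 - j) (j-2),
        2 * (∑ k ∈ Finset.Icc (i+1) (j-1),
          ∑ l ∈ Finset.Icc (j+1) (4*m-k), (1:ℤ))
        = ((j-1)*(8*m-3*j)) + (-(8*m-2*j-1))*i + 1*i^2 + 0*i^3 := by
      intro i hi
      rw [Finset.mem_Icc] at hi
      have step1 : (∑ k ∈ Finset.Icc (i+1) (j-1),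
          ∑ l ∈ Finset.Icc (j+1) (4*m-k), (1:ℤ))
          = ∑ k ∈ Finset.Icc (i+1) (j-1),
            ((4*m - j - i - 1) + (-1)*k + 0*k^2 + 0*k^3 + (i + 1 + 0*k)) := by
        refine Finset.sum_congr rfl fun k hk => ?_
        rw [Finset.mem_Icc] at hk
        rw [Finset.sum_const, Int.card_Icc, nsmul_eq_mul, mul_one]
        rw [Int.toNat_of_nonneg (show (0:ℤ) ≤ 4*m - k + 1 - (j+1) by omega)]
        ring
      have step1' : (∑ k ∈ Finset.Icc (i+1) (j-1),
          ∑ l ∈ Finset.Icc (j+1) (4*m-k), (1:ℤ))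
          = ∑ k ∈ Finset.Icc (i+1) (j-1),
            ((4*m - j) + (-1)*k + 0*k^2 + 0*k^3) := by
        rw [step1]; refine Finset.sum_congr rfl fun k hk => ?_; ring
      have hc := cubicSum (4*m - j) (-1) 0 0 (i+1) (j-1) (by omega)
      rw [step1']
      linarith [hc]
    -- sum over i
    have step2 : (∑ i ∈ Finset.Icc (2*m+1 - j) (j-2),
        ∑ k ∈ Finset.Icc (i+1) (j-1),
          ∑ l ∈ Finset.Icc (j+1) (4*m-k), (1:ℤ)) * 2
        = ∑ i ∈ Finset.Icc (2*m+1 - j) (j-2),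
          (((j-1)*(8*m-3*j)) + (-(8*m-2*j-1))*i + 1*i^2 + 0*i^3) := by
      rw [Finset.sum_mul]
      refine Finset.sum_congr rfl fun i hi => ?_
      rw [mul_comm]; exact hh i hi
    have hc := cubicSum ((j-1)*(8*m-3*j)) (-(8*m-2*j-1)) 1 0
      (2*m+1 - j) (j-2) (by omega)
    have h24 : 24 * (∑ i ∈ Finset.Icc (2*m+1 - j) (j-2),
        ∑ k ∈ Finset.Icc (i+1) (j-1),
          ∑ l ∈ Finset.Icc (j+1) (4*m-k), (1:ℤ))
        = 12 * ∑ i ∈ Finset.Icc (2*m+1 - j) (j-2),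
          (((j-1)*(8*m-3*j)) + (-(8*m-2*j-1))*i + 1*i^2 + 0*i^3) := by
      rw [← step2]; ring
    rw [hc] at h24
    linarith [h24]
  -- sum over j
  set S := (∑ j ∈ Finset.Icc (m+2) (2*m), ∑ i ∈ Finset.Icc ((4*m+2)/2 - j) (j-2),
      ∑ k ∈ Finset.Icc (i+1) (j-1), ∑ l ∈ Finset.Icc (j+1) (4*m-k), (1:ℤ)) with hS
  have step3 : S * 3 = ∑ j ∈ Finset.Icc (m+2) (2*m),
      ((10*m + 30*m^2 + 20*m^3) + (-4 - 42*m - 48*m^2)*j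
        + (12 + 36*m)*j^2 + (-8)*j^3) := by
    rw [hS, Finset.sum_mul]
    refine Finset.sum_congr rfl fun j hj => ?_
    rw [mul_comm]; exact hg j hj
  have hc := cubicSum (10*m + 30*m^2 + 20*m^3) (-4 - 42*m - 48*m^2)
      (12 + 36*m) (-8) (m+2) (2*m) (by omega)
  have h36 : 36 * S = 12 * ∑ j ∈ Finset.Icc (m+2) (2*m),
      ((10*m + 30*m^2 + 20*m^3) + (-4 - 42*m - 48*m^2)*j
        + (12 + 36*m)*j^2 + (-8)*j^3) := by
    rw [← step3]; ring
  rw [hc] at h36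
  have key : (4*m)^2*(4*m-2)*(4*m-4) = 384 * S := by linarith
  rw [key, Int.mul_ediv_cancel_left _ (by norm_num)]
end

section
/- For a positive integer n with n ≡ 0 (mod 4) and n ≥ 4, the sum \sum_{j=3}^{n/4} \sum_{i=1}^{j-2} ( \sum_{k=i+1}^{j-1} \sum_{l=j+1}^{n/2-k} 1 + \sum_{k=i+1}^{j-1} \sum_{l=n+1-k}^{n} 1 ) equals n(n-4)(n-8)(5n-12)/6144. -/
open Finset

private lemma icc_split (a b : ℤ) (h : a ≤ b + 1) :
    Finset.Icc a (b+1) = insert (b+1) (Finset.Icc a b) := by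
  ext x
  simp only [Finset.mem_Icc, Finset.mem_insert]
  omega

private lemma gsum (t : ℤ) (ht : 0 ≤ t) :
    2 * ∑ i ∈ Finset.Icc 1 t, (t + 1 - i) = t * (t + 1) := by
  refine Int.le_induction (motive := fun t _ => 2 * ∑ i ∈ Finset.Icc 1 t, (t + 1 - i) = t * (t + 1)) ?_ ?_ t ht
  · simp
  · intro t ht ih
    rw [icc_split 1 t (by linarith), Finset.sum_insert (by simp)]
    have hc : ∑ i ∈ Finset.Icc (1:ℤ) t, (t + 1 + 1 - i)
        = (∑ i ∈ Finset.Icc (1:ℤ) t, (t + 1 - i)) + ∑ i ∈ Finset.Icc (1:ℤ) t, 1 := by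
      rw [← Finset.sum_add_distrib]
      exact Finset.sum_congr rfl fun i _ => by ring
    have hcard : ∑ i ∈ Finset.Icc (1:ℤ) t, (1:ℤ) = t := by
      rw [Finset.sum_const, Int.card_Icc, nsmul_eq_mul, mul_one]
      omega
    rw [hc, hcard]
    linear_combination ih

private lemma s1 (m : ℤ) (hm : 2 ≤ m) :
    6 * ∑ j ∈ Finset.Icc 3 m, ∑ i ∈ Finset.Icc 1 (j-2), (j - 1 - i)
      = m * (m-1) * (m-2) := by
  refine Int.le_induction (motive := fun m _ => 6 * ∑ j ∈ Finset.Icc 3 m, ∑ i ∈ Finset.Icc 1 (j-2), (j - 1 - i) = m * (m-1) * (m-2)) ?_ ?_ m hm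
  ·
    rw [Finset.Icc_eq_empty (by norm_num)]
    norm_num
  · intro m hm ih
    rw [icc_split 3 m (by linarith), Finset.sum_insert (by simp)]
    have htop : ∑ i ∈ Finset.Icc (1:ℤ) (m+1-2), (m+1-1-i)
        = ∑ i ∈ Finset.Icc (1:ℤ) (m-1), ((m-1) + 1 - i) := by
      rw [show m+1-2 = m-1 by ring]
      exact Finset.sum_congr rfl fun i _ => by ring
    rw [htop]
    have hg := gsum (m-1) (by linarith)
    linear_combination ih + 3 * hg

private lemma key (m : ℤ) (hm : 2 ≤ m) :
    24 * ∑ j ∈ Finset.Icc 3 m, ∑ i ∈ Finset.Icc 1 (j-2), (j - 1 - i) * (2*m - j)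
      = m * (m-1) * (m-2) * (5*m - 3) := by
  refine Int.le_induction (motive := fun m _ => 24 * ∑ j ∈ Finset.Icc 3 m, ∑ i ∈ Finset.Icc 1 (j-2), (j - 1 - i) * (2*m - j) = m * (m-1) * (m-2) * (5*m - 3)) ?_ ?_ m hm
  ·
    rw [Finset.Icc_eq_empty (by norm_num)]
    norm_num
  · intro m hm ih
    rw [icc_split 3 m (by linarith), Finset.sum_insert (by simp)]
    have htop : ∑ i ∈ Finset.Icc (1:ℤ) (m+1-2), (m+1-1-i) * (2*(m+1) - (m+1))
        = (∑ i ∈ Finset.Icc (1:ℤ) (m-1), ((m-1) + 1 - i)) * (m+1) := by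
      rw [show m+1-2 = m-1 by ring, Finset.sum_mul]
      exact Finset.sum_congr rfl fun i _ => by ring
    have hrest : ∑ j ∈ Finset.Icc (3:ℤ) m, ∑ i ∈ Finset.Icc 1 (j-2), (j-1-i) * (2*(m+1) - j)
        = (∑ j ∈ Finset.Icc (3:ℤ) m, ∑ i ∈ Finset.Icc 1 (j-2), (j-1-i) * (2*m - j))
          + 2 * ∑ j ∈ Finset.Icc (3:ℤ) m, ∑ i ∈ Finset.Icc 1 (j-2), (j-1-i) := by
      rw [Finset.mul_sum, ← Finset.sum_add_distrib]
      refine Finset.sum_congr rfl fun j _ => ?_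
      rw [Finset.mul_sum, ← Finset.sum_add_distrib]
      exact Finset.sum_congr rfl fun i _ => by ring
    rw [htop, hrest]
    have hg := gsum (m-1) (by linarith)
    have hs := s1 m hm
    linear_combination ih + 8 * hs + 12 * (m+1) * hg

theorem stmt_2 (n : ℤ) (hn : 4 ≤ n) (h4 : 4 ∣ n) :
    (∑ j ∈ Finset.Icc 3 (n/4), ∑ i ∈ Finset.Icc 1 (j-2),
      ((∑ k ∈ Finset.Icc (i+1) (j-1), ∑ l ∈ Finset.Icc (j+1) (n/2 - k), (1:ℤ)) +
       (∑ k ∈ Finset.Icc (i+1) (j-1), ∑ l ∈ Finset.Icc (n+1-k) n, (1:ℤ))))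
      = n*(n-4)*(n-8)*(5*n-12)/6144 := by
  obtain ⟨m, rfl⟩ := h4
  have hm : 1 ≤ m := by linarith
  have h14 : 4 * m / 4 = m := by omega
  have h12 : 4 * m / 2 = 2 * m := by omega
  rw [h14]
  have hA : ∀ j ∈ Finset.Icc (3:ℤ) m, (∑ i ∈ Finset.Icc 1 (j-2),
      ((∑ k ∈ Finset.Icc (i+1) (j-1), ∑ l ∈ Finset.Icc (j+1) (4*m/2 - k), (1:ℤ)) +
       (∑ k ∈ Finset.Icc (i+1) (j-1), ∑ l ∈ Finset.Icc (4*m+1-k) (4*m), (1:ℤ))))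
      = ∑ i ∈ Finset.Icc 1 (j-2), (j - 1 - i) * (2*m - j) := by
    intro j hj
    rw [Finset.mem_Icc] at hj
    refine Finset.sum_congr rfl fun i hi => ?_
    rw [Finset.mem_Icc] at hi
    rw [← Finset.sum_add_distrib]
    have hk : ∀ k ∈ Finset.Icc (i+1) (j-1),
        ((∑ l ∈ Finset.Icc (j+1) (4*m/2 - k), (1:ℤ)) +
         (∑ l ∈ Finset.Icc (4*m+1-k) (4*m), (1:ℤ))) = 2*m - j := by
      intro k hk
      rw [Finset.mem_Icc] at hk
      rw [h12]
      simp only [Finset.sum_const, Int.card_Icc, nsmul_eq_mul, mul_one]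
      omega
    rw [Finset.sum_congr rfl hk, Finset.sum_const, Int.card_Icc, nsmul_eq_mul]
    congr 1
    omega
  rw [Finset.sum_congr rfl hA]
  rcases eq_or_lt_of_le hm with h | h
  · rw [← h, Finset.Icc_eq_empty (by norm_num)]
    norm_num
  · have h2 : 2 ≤ m := h
    have hkey := key m h2
    have hrhs : 4*m*(4*m-4)*(4*m-8)*(5*(4*m)-12)
        = (∑ j ∈ Finset.Icc (3:ℤ) m, ∑ i ∈ Finset.Icc 1 (j-2), (j - 1 - i) * (2*m - j)) * 6144 := by
      linear_combination (-256) * hkey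
    rw [hrhs, Int.mul_ediv_cancel _ (by norm_num)]
end

section
/- Let n ≥ 5 be odd, m = (n+1)/2, and let a be the entries of the matrix M_n (odd case). Define σ(i,j) = #{(k,l) : i < k < j < l ≤ n, a(k,l) = a(i,j)} and σ̃(i,j) = #{(k,l) : 1 ≤ k < i < l < j, a(k,l) = a(i,j)}, and c(i,j) = σ(i,j) + σ̃(i,j). Then c(m,n) = c(1,m) + c(2,n) + 1. -/
/-- Entry `a_{(i,j)}` of the matrix `M_n` for odd `n`. -/
def Mn (n i j : ℤ) : ℤ :=
  if j ≤ i + 1 ∨ (i, j) = (1, n) then 0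
  else if ((n+3)/2 - i ≤ j ∧ j ≤ n - i) ∨ j ≥ (3*n+1)/2 - i then 1
  else -1

/-- `σ(i,j)`: number of pairs `(k,l)` with `i < k < j < l ≤ n` and `a(k,l) = a(i,j)`. -/
noncomputable def sigma' (n i j : ℤ) : ℕ :=
  ((Finset.Icc 1 n ×ˢ Finset.Icc 1 n).filter
    (fun p => i < p.1 ∧ p.1 < j ∧ j < p.2 ∧ Mn n p.1 p.2 = Mn n i j)).card

/-- `σ̃(i,j)`: number of pairs `(k,l)` with `1 ≤ k < i < l < j` and `a(k,l) = a(i,j)`. -/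
noncomputable def sigmaTilde (n i j : ℤ) : ℕ :=
  ((Finset.Icc 1 n ×ˢ Finset.Icc 1 n).filter
    (fun p => 1 ≤ p.1 ∧ p.1 < i ∧ i < p.2 ∧ p.2 < j ∧ Mn n p.1 p.2 = Mn n i j)).card

/-- `c(i,j) = σ(i,j) + σ̃(i,j)`. -/
noncomputable def cD (n i j : ℤ) : ℕ := sigma' n i j + sigmaTilde n i j

lemma Mn_eq_one_iff (n m k l : ℤ) (h2 : n % 2 = 1) (hm : m = (n+1)/2)
    (hk : 1 ≤ k) (hkm : k < m) (hl : m < l) (hln : l ≤ n) :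
    Mn n k l = 1 ↔ l ≤ n - k := by
  simp only [Mn, Prod.mk.injEq]
  split_ifs with ha hb
  · refine iff_of_false (by norm_num) ?_
    have ha' : l ≤ k + 1 ∨ (k = 1 ∧ l = n) := ha
    omega
  · refine iff_of_true rfl ?_
    have hb' : ((n+3)/2 - k ≤ l ∧ l ≤ n - k) ∨ ((3*n+1)/2 - k ≤ l) := hb
    omega
  · refine iff_of_false (by norm_num) ?_
    have hb' : ¬(((n+3)/2 - k ≤ l ∧ l ≤ n - k) ∨ ((3*n+1)/2 - k ≤ l)) := hb
    omega

lemma Mn_eq_neg_one_iff (n m l : ℤ) (h2 : n % 2 = 1) (hm : m = (n+1)/2)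
    (hl : 2 < l) (hln : l < n) :
    Mn n 1 l = -1 ↔ l ≤ m - 1 := by
  simp only [Mn, Prod.mk.injEq]
  split_ifs with ha hb
  · refine iff_of_false (by norm_num) ?_
    rcases ha with h | ⟨-, h⟩
    · have h' : l ≤ 1 + 1 := h; omega
    · have h' : l = n := h; omega
  · refine iff_of_false (by norm_num) ?_
    have hb' : ((n+3)/2 - 1 ≤ l ∧ l ≤ n - 1) ∨ ((3*n+1)/2 - 1 ≤ l) := hb
    omega
  · refine iff_of_true rfl ?_
    have hb' : ¬(((n+3)/2 - 1 ≤ l ∧ l ≤ n - 1) ∨ ((3*n+1)/2 - 1 ≤ l)) := hb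
    omega

lemma Mn_mn (n m : ℤ) (hn : 5 ≤ n) (h2 : n % 2 = 1) (hm : m = (n+1)/2) : Mn n m n = 1 := by
  simp only [Mn, Prod.mk.injEq]
  split_ifs with ha hb
  · exact absurd (show n ≤ m + 1 ∨ (m = 1 ∧ True) from ha)
      (by rintro (h | ⟨h, -⟩) <;> [skip; exact absurd (show m = 1 from h) (by omega)]
          exact absurd (show n ≤ m + 1 from h) (by omega))
  · rfl
  · exact absurd (show ((n+3)/2 - m ≤ n ∧ n ≤ n - m) ∨ ((3*n+1)/2 - m ≤ n) from
      Or.inr (by omega)) hb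

lemma Mn_1m (n m : ℤ) (hn : 5 ≤ n) (h2 : n % 2 = 1) (hm : m = (n+1)/2) : Mn n 1 m = 1 := by
  simp only [Mn, Prod.mk.injEq]
  split_ifs with ha hb
  · exact absurd (show m ≤ 1 + 1 ∨ (True ∧ m = n) from ha)
      (by rintro (h | ⟨-, h⟩) <;> [skip; exact absurd (show m = n from h) (by omega)]
          exact absurd (show m ≤ 1 + 1 from h) (by omega))
  · rfl
  · exact absurd (show ((n+3)/2 - 1 ≤ m ∧ m ≤ n - 1) ∨ ((3*n+1)/2 - 1 ≤ m) from
      Or.inl (by omega)) hb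

lemma Mn_2n (n m : ℤ) (hn : 5 ≤ n) (h2 : n % 2 = 1) (hm : m = (n+1)/2) : Mn n 2 n = -1 := by
  simp only [Mn, Prod.mk.injEq]
  split_ifs with ha hb
  · exact absurd (show n ≤ 2 + 1 ∨ ((2:ℤ) = 1 ∧ True) from ha)
      (by rintro (h | ⟨h, -⟩) <;> [skip; exact absurd (show (2:ℤ) = 1 from h) (by omega)]
          exact absurd (show n ≤ 2 + 1 from h) (by omega))
  · exact absurd (show ((n+3)/2 - 2 ≤ n ∧ n ≤ n - 2) ∨ ((3*n+1)/2 - 2 ≤ n) from hb) (by omega)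
  · rfl

theorem stmt_10 (n : ℤ) (hn : 5 ≤ n) (hodd : Odd n) (m : ℤ) (hm : m = (n+1)/2) :
    cD n m n = cD n 1 m + cD n 2 n + 1 := by
  have h2 : n % 2 = 1 := Int.odd_iff.mp hodd
  have hm3 : 3 ≤ m := by omega
  have hMmn : Mn n m n = 1 := Mn_mn n m hn h2 hm
  have hM1m : Mn n 1 m = 1 := Mn_1m n m hn h2 hm
  have hM2n : Mn n 2 n = -1 := Mn_2n n m hn h2 hm
  set box : Finset (ℤ × ℤ) := Finset.Icc 1 n ×ˢ Finset.Icc 1 n with hbox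
  -- three trivially empty counts
  have hz1 : sigma' n m n = 0 := by
    rw [sigma', Finset.card_eq_zero, Finset.filter_eq_empty_iff]
    rintro ⟨k, l⟩ hkl
    simp only [hbox, Finset.mem_product, Finset.mem_Icc] at hkl
    rintro ⟨-, -, h3, -⟩; omega
  have hz2 : sigmaTilde n 1 m = 0 := by
    rw [sigmaTilde, Finset.card_eq_zero, Finset.filter_eq_empty_iff]
    rintro ⟨k, l⟩ hkl
    rintro ⟨ha, hb, -, -, -⟩; omega
  have hz3 : sigma' n 2 n = 0 := by
    rw [sigma', Finset.card_eq_zero, Finset.filter_eq_empty_iff]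
    rintro ⟨k, l⟩ hkl
    simp only [hbox, Finset.mem_product, Finset.mem_Icc] at hkl
    rintro ⟨-, -, h3, -⟩; omega
  -- A = sigmaTilde n m n
  have hA : sigmaTilde n m n
      = (box.filter (fun p => 1 ≤ p.1 ∧ p.1 ≤ m - 2 ∧ m + 1 ≤ p.2 ∧ p.2 ≤ n - p.1)).card := by
    rw [sigmaTilde, hMmn]
    congr 1
    apply Finset.filter_congr
    rintro ⟨k, l⟩ hkl
    simp only [hbox, Finset.mem_product, Finset.mem_Icc] at hkl
    constructor
    · rintro ⟨ha, hb, hc, hd, he⟩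
      have := (Mn_eq_one_iff n m k l h2 hm (by omega) hb hc (by omega)).mp he
      exact ⟨ha, by omega, by omega, this⟩
    · rintro ⟨ha, hb, hc, hd⟩
      exact ⟨ha, by omega, by omega, by omega,
        (Mn_eq_one_iff n m k l h2 hm (by omega) (by omega) (by omega) (by omega)).mpr hd⟩
  -- B = sigma' n 1 m
  have hB : sigma' n 1 m
      = (box.filter (fun p => 2 ≤ p.1 ∧ p.1 ≤ m - 2 ∧ m + 1 ≤ p.2 ∧ p.2 ≤ n - p.1)).card := by
    rw [sigma', hM1m]
    congr 1
    apply Finset.filter_congr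
    rintro ⟨k, l⟩ hkl
    simp only [hbox, Finset.mem_product, Finset.mem_Icc] at hkl
    constructor
    · rintro ⟨ha, hb, hc, he⟩
      have := (Mn_eq_one_iff n m k l h2 hm (by omega) hb hc (by omega)).mp he
      exact ⟨by omega, by omega, by omega, this⟩
    · rintro ⟨ha, hb, hc, hd⟩
      exact ⟨by omega, by omega, by omega,
        (Mn_eq_one_iff n m k l h2 hm (by omega) (by omega) (by omega) (by omega)).mpr hd⟩
  -- C = sigmaTilde n 2 n
  have hC : sigmaTilde n 2 n
      = (box.filter (fun p => p.1 = 1 ∧ 3 ≤ p.2 ∧ p.2 ≤ m - 1)).card := by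
    rw [sigmaTilde, hM2n]
    congr 1
    apply Finset.filter_congr
    rintro ⟨k, l⟩ hkl
    simp only [hbox, Finset.mem_product, Finset.mem_Icc] at hkl
    constructor
    · rintro ⟨ha, hb, hc, hd, he⟩
      have hk1 : k = 1 := by omega
      subst hk1
      have := (Mn_eq_neg_one_iff n m l h2 hm hc hd).mp he
      exact ⟨rfl, by omega, this⟩
    · rintro ⟨ha, hb, hc⟩
      subst ha
      exact ⟨le_refl 1, by omega, by omega, by omega,
        (Mn_eq_neg_one_iff n m l h2 hm (by omega) (by omega)).mpr hc⟩
  -- split A into B ∪ D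
  have hsplit : (box.filter (fun p => 1 ≤ p.1 ∧ p.1 ≤ m - 2 ∧ m + 1 ≤ p.2 ∧ p.2 ≤ n - p.1))
      = (box.filter (fun p => 2 ≤ p.1 ∧ p.1 ≤ m - 2 ∧ m + 1 ≤ p.2 ∧ p.2 ≤ n - p.1))
        ∪ (box.filter (fun p => p.1 = 1 ∧ m + 1 ≤ p.2 ∧ p.2 ≤ n - 1)) := by
    rw [← Finset.filter_or]
    apply Finset.filter_congr
    rintro ⟨k, l⟩ hkl
    simp only [hbox, Finset.mem_product, Finset.mem_Icc] at hkl
    constructor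
    · rintro ⟨ha, hb, hc, hd⟩
      by_cases h : 2 ≤ k
      · exact Or.inl ⟨h, hb, hc, hd⟩
      · exact Or.inr ⟨by omega, hc, by omega⟩
    · rintro (⟨ha, hb, hc, hd⟩ | ⟨ha, hb, hc⟩)
      · exact ⟨by omega, hb, hc, hd⟩
      · exact ⟨by omega, by omega, hb, by omega⟩
  have hdisj : Disjoint
      (box.filter (fun p => 2 ≤ p.1 ∧ p.1 ≤ m - 2 ∧ m + 1 ≤ p.2 ∧ p.2 ≤ n - p.1))
      (box.filter (fun p => p.1 = 1 ∧ m + 1 ≤ p.2 ∧ p.2 ≤ n - 1)) := by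
    rw [Finset.disjoint_left]
    rintro ⟨k, l⟩ h1 h2
    simp only [Finset.mem_filter] at h1 h2
    omega
  -- card of D
  have hD : (box.filter (fun p => p.1 = 1 ∧ m + 1 ≤ p.2 ∧ p.2 ≤ n - 1)).card
      = (n - m - 1).toNat := by
    have heq : box.filter (fun p => p.1 = 1 ∧ m + 1 ≤ p.2 ∧ p.2 ≤ n - 1)
        = ({1} : Finset ℤ) ×ˢ Finset.Icc (m + 1) (n - 1) := by
      ext ⟨k, l⟩
      simp only [hbox, Finset.mem_filter, Finset.mem_product, Finset.mem_Icc,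
        Finset.mem_singleton]
      omega
    rw [heq, Finset.card_product, Finset.card_singleton, Int.card_Icc]
    omega
  -- card of C-set
  have hCcard : (box.filter (fun p => p.1 = 1 ∧ 3 ≤ p.2 ∧ p.2 ≤ m - 1)).card
      = (m - 3).toNat := by
    have heq : box.filter (fun p => p.1 = 1 ∧ 3 ≤ p.2 ∧ p.2 ≤ m - 1)
        = ({1} : Finset ℤ) ×ˢ Finset.Icc 3 (m - 1) := by
      ext ⟨k, l⟩
      simp only [hbox, Finset.mem_filter, Finset.mem_product, Finset.mem_Icc,
        Finset.mem_singleton]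
      omega
    rw [heq, Finset.card_product, Finset.card_singleton, Int.card_Icc]
    omega
  have hAcard := hA
  rw [hsplit, Finset.card_union_of_disjoint hdisj, hD] at hAcard
  simp only [cD, hz1, hz2, hz3, hB, hC, hAcard, hCcard]
  omega
end

section
/- Let n ≥ 5 be odd, m = (n+1)/2, and a the entries of M_n (odd case). Then σ̃(2,n) := #{(k,l) : 1 ≤ k < 2 < l < n, a(k,l) = a(2,n)} = m - 3. -/
theorem stmt_11 (n : ℤ) (hn : 5 ≤ n) (hodd : Odd n) (m : ℤ) (hm : m = (n+1)/2) :
    (sigmaTilde n 2 n : ℤ) = m - 3 := by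
  obtain ⟨k, hk⟩ := hodd
  have hmn : n = 2*m - 1 := by omega
  have hA : Mn n 2 n = -1 := by
    simp only [Mn, Prod.mk.injEq]
    split_ifs with h1 h2 <;> omega
  have hB : ∀ l : ℤ, 2 < l → l < n → (Mn n 1 l = -1 ↔ l ≤ m - 1) := by
    intro l h1 h2
    simp only [Mn, Prod.mk.injEq]
    split_ifs with h3 h4
    · omega
    · exact iff_of_false (by norm_num) (by omega)
    · omega
  have hset : ((Finset.Icc 1 n ×ˢ Finset.Icc 1 n).filter
      (fun p => 1 ≤ p.1 ∧ p.1 < 2 ∧ 2 < p.2 ∧ p.2 < n ∧ Mn n p.1 p.2 = Mn n 2 n))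
      = (Finset.Icc (3:ℤ) (m-1)).image (fun l => ((1:ℤ), l)) := by
    ext p
    simp only [Finset.mem_filter, Finset.mem_product, Finset.mem_image, Finset.mem_Icc, hA]
    constructor
    · rintro ⟨⟨h0, h1⟩, h2, h3, h4, h5, h6⟩
      have hp1 : p.1 = 1 := by omega
      rw [hp1] at h6
      rw [hB p.2 h4 h5] at h6
      exact ⟨p.2, ⟨by omega, h6⟩, by rw [← hp1]⟩
    · rintro ⟨l, ⟨hl1, hl2⟩, rfl⟩
      refine ⟨⟨by omega, by omega⟩, by omega, by omega, by omega, by omega, ?_⟩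
      rw [hB l (by omega) (by omega)]
      omega
  unfold sigmaTilde
  rw [hset, Finset.card_image_of_injective _ (fun a b h => by simpa using h)]
  rw [Int.card_Icc]
  omega
end

section
/- For a positive integer n with n ≡ 3 (mod 4), the sum \sum_{j=(n+9)/4}^{(n-1)/2} \sum_{i=(n+3)/2-j}^{j-2} \sum_{k=i+1}^{j-1} \sum_{l=j+1}^{n-k} 1 equals (n-3)(n-7)(n^2-4n+7)/384. -/
open Finset

private lemma sum_Icc_top (f : ℤ → ℤ) {a b : ℤ} (h : a ≤ b + 1) :
    ∑ k ∈ Finset.Icc a (b+1), f k = (∑ k ∈ Finset.Icc a b, f k) + f (b+1) := by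
  have he : Finset.Icc a (b+1) = insert (b+1) (Finset.Icc a b) := by
    ext x; simp only [Finset.mem_insert, Finset.mem_Icc]; omega
  rw [he, Finset.sum_insert (by simp only [Finset.mem_Icc]; omega), add_comm]

private lemma kSum (c a : ℤ) : ∀ b, a - 1 ≤ b →
    2 * ∑ k ∈ Finset.Icc a b, (c - k) = (b+1-a)*(2*c-a-b) := by
  intro b
  refine Int.le_induction (m := a - 1)
    (motive := fun b _ => 2 * ∑ k ∈ Finset.Icc a b, (c - k) = (b+1-a)*(2*c-a-b)) ?_ ?_ b
  · beta_reduce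
    rw [Finset.Icc_eq_empty (by omega), Finset.sum_empty]; ring
  · intro b hb ih
    beta_reduce at ih ⊢
    rw [sum_Icc_top (a := a) (b := b) _ (by omega), mul_add, ih]; ring

private lemma iSum (P Q a : ℤ) : ∀ b, a - 1 ≤ b →
    6 * ∑ i ∈ Finset.Icc a b, (P - i) * (Q - i)
      = 6*(b+1-a)*P*Q - 3*(P+Q)*(b+1-a)*(a+b)
        + (b*(b+1)*(2*b+1) - (a-1)*a*(2*a-1)) := by
  intro b
  refine Int.le_induction (m := a - 1)
    (motive := fun b _ => 6 * ∑ i ∈ Finset.Icc a b, (P - i) * (Q - i)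
      = 6*(b+1-a)*P*Q - 3*(P+Q)*(b+1-a)*(a+b)
        + (b*(b+1)*(2*b+1) - (a-1)*a*(2*a-1))) ?_ ?_ b
  · beta_reduce
    rw [Finset.Icc_eq_empty (by omega), Finset.sum_empty]; ring
  · intro b hb ih
    beta_reduce at ih ⊢
    rw [sum_Icc_top (a := a) (b := b) _ (by omega), mul_add, ih]; ring

private lemma jSum (m : ℤ) : ∀ b, m + 1 ≤ b →
    ∑ j ∈ Finset.Icc (m+3) b,
      (6*((j-2)+1-(2*m+3-j))*(j-1)*(8*m+6-3*j)
        - 3*((j-1)+(8*m+6-3*j))*((j-2)+1-(2*m+3-j))*((2*m+3-j)+(j-2))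
        + ((j-2)*((j-2)+1)*(2*(j-2)+1) - ((2*m+3-j)-1)*(2*m+3-j)*(2*(2*m+3-j)-1)))
      = -12 + 50*b - 70*b^2 + 40*b^3 - 8*b^4 - 74*m + 208*m*b - 180*m*b^2
          + 48*m*b^3 - 138*m^2 + 240*m^2*b - 96*m^2*b^2 - 100*m^3 + 80*m^3*b
          - 24*m^4 := by
  intro b
  refine Int.le_induction (m := m + 1)
    (motive := fun b _ => ∑ j ∈ Finset.Icc (m+3) b,
      (6*((j-2)+1-(2*m+3-j))*(j-1)*(8*m+6-3*j)
        - 3*((j-1)+(8*m+6-3*j))*((j-2)+1-(2*m+3-j))*((2*m+3-j)+(j-2))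
        + ((j-2)*((j-2)+1)*(2*(j-2)+1) - ((2*m+3-j)-1)*(2*m+3-j)*(2*(2*m+3-j)-1)))
      = -12 + 50*b - 70*b^2 + 40*b^3 - 8*b^4 - 74*m + 208*m*b - 180*m*b^2
          + 48*m*b^3 - 138*m^2 + 240*m^2*b - 96*m^2*b^2 - 100*m^3 + 80*m^3*b
          - 24*m^4) ?_ ?_ b
  · beta_reduce
    rw [Finset.Icc_eq_empty (by omega), Finset.sum_empty]; ring
  · intro b hb ih
    beta_reduce at ih ⊢
    rcases eq_or_lt_of_le hb with h | h
    · subst h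
      rw [Finset.Icc_eq_empty (by omega), Finset.sum_empty]; ring
    · rw [sum_Icc_top (a := m+3) (b := b) _ (by omega), ih]; ring

theorem stmt_15 (n : ℤ) (hn : 0 < n) (h4 : n % 4 = 3) :
    (∑ j ∈ Finset.Icc ((n+9)/4) ((n-1)/2), ∑ i ∈ Finset.Icc ((n+3)/2 - j) (j-2),
      ∑ k ∈ Finset.Icc (i+1) (j-1), ∑ l ∈ Finset.Icc (j+1) (n-k), (1:ℤ))
      = (n-3)*(n-7)*(n^2-4*n+7)/384 := by
  obtain ⟨m, hm, rfl⟩ : ∃ m, 0 ≤ m ∧ n = 4*m+3 := ⟨n/4, by omega, by omega⟩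
  rw [show (4*m+3+9)/4 = m+3 by omega, show (4*m+3-1)/2 = 2*m+1 by omega,
    show (4*m+3+3)/2 = 2*m+3 by omega]
  have step1 : (∑ j ∈ Finset.Icc (m+3) (2*m+1), ∑ i ∈ Finset.Icc (2*m+3-j) (j-2),
      ∑ k ∈ Finset.Icc (i+1) (j-1), ∑ l ∈ Finset.Icc (j+1) (4*m+3-k), (1:ℤ))
      = ∑ j ∈ Finset.Icc (m+3) (2*m+1), ∑ i ∈ Finset.Icc (2*m+3-j) (j-2),
        ∑ k ∈ Finset.Icc (i+1) (j-1), (4*m+3-j-k) := by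
    refine Finset.sum_congr rfl fun j hj => Finset.sum_congr rfl fun i hi =>
      Finset.sum_congr rfl fun k hk => ?_
    simp only [Finset.mem_Icc] at hj hi hk
    simp only [Finset.sum_const, Int.card_Icc, nsmul_eq_mul, mul_one]
    omega
  rw [step1]
  set T := ∑ j ∈ Finset.Icc (m+3) (2*m+1), ∑ i ∈ Finset.Icc (2*m+3-j) (j-2),
      ∑ k ∈ Finset.Icc (i+1) (j-1), (4*m+3-j-k) with hT
  have key : 12 * T = -12 + 50*(2*m+1) - 70*(2*m+1)^2 + 40*(2*m+1)^3 - 8*(2*m+1)^4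
      - 74*m + 208*m*(2*m+1) - 180*m*(2*m+1)^2 + 48*m*(2*m+1)^3 - 138*m^2
      + 240*m^2*(2*m+1) - 96*m^2*(2*m+1)^2 - 100*m^3 + 80*m^3*(2*m+1) - 24*m^4 := by
    have e : ∀ j ∈ Finset.Icc (m+3) (2*m+1),
        12 * (∑ i ∈ Finset.Icc (2*m+3-j) (j-2), ∑ k ∈ Finset.Icc (i+1) (j-1), (4*m+3-j-k))
        = (6*((j-2)+1-(2*m+3-j))*(j-1)*(8*m+6-3*j)
            - 3*((j-1)+(8*m+6-3*j))*((j-2)+1-(2*m+3-j))*((2*m+3-j)+(j-2))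
            + ((j-2)*((j-2)+1)*(2*(j-2)+1)
              - ((2*m+3-j)-1)*(2*m+3-j)*(2*(2*m+3-j)-1))) := by
      intro j hj
      simp only [Finset.mem_Icc] at hj
      have h1 : ∀ i ∈ Finset.Icc (2*m+3-j) (j-2),
          (2:ℤ) * ∑ k ∈ Finset.Icc (i+1) (j-1), (4*m+3-j-k)
            = ((j-1) - i) * ((8*m+6-3*j) - i) := by
        intro i hi
        simp only [Finset.mem_Icc] at hi
        have := kSum (4*m+3-j) (i+1) (j-1) (by omega)
        rw [this]; ring
      have h2 := Finset.sum_congr rfl h1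
      calc 12 * (∑ i ∈ Finset.Icc (2*m+3-j) (j-2), ∑ k ∈ Finset.Icc (i+1) (j-1), (4*m+3-j-k))
          = 6 * ∑ i ∈ Finset.Icc (2*m+3-j) (j-2),
              (2 * ∑ k ∈ Finset.Icc (i+1) (j-1), (4*m+3-j-k)) := by
            rw [← Finset.mul_sum]; ring
        _ = 6 * ∑ i ∈ Finset.Icc (2*m+3-j) (j-2), ((j-1) - i) * ((8*m+6-3*j) - i) := by
            rw [h2]
        _ = _ := by rw [iSum (j-1) (8*m+6-3*j) (2*m+3-j) (j-2) (by omega)]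
    rw [hT, Finset.mul_sum, Finset.sum_congr rfl e, jSum m (2*m+1) (by omega)]
  have h384 : (4*m+3-3)*(4*m+3-7)*((4*m+3)^2-4*(4*m+3)+7) = 384 * T := by
    linear_combination -32 * key
  rw [h384, Int.mul_ediv_cancel_left _ (by norm_num)]
end

section
/- For a positive integer n with n ≡ 3 (mod 4), the sum \sum_{i=(n+1)/2}^{(3n-5)/4} \sum_{j=(3n+3)/4}^{(3n-1)/2-i} \sum_{l=j+1}^{(3n-3)/2-i} \sum_{k=i+1}^{(3n-1)/2-l} 1 equals (n+1)(n-3)(n-7)(n-11)/6144. -/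
private lemma G1 (a b : ℤ) (h : a ≤ b + 1) :
    ∑ k ∈ Finset.Icc a b, (1:ℤ) = b + 1 - a := by
  rw [Finset.sum_const, Int.card_Icc, nsmul_eq_mul, mul_one]
  omega

private lemma sum_bot (f : ℤ → ℤ) (a c : ℤ) (h : a ≤ c) :
    ∑ x ∈ Finset.Icc a c, f x = f a + ∑ x ∈ Finset.Icc (a+1) c, f x := by
  have : Finset.Icc a c = insert a (Finset.Icc (a+1) c) := by
    ext x
    simp only [Finset.mem_Icc, Finset.mem_insert]
    omega
  rw [this, Finset.sum_insert (by simp only [Finset.mem_Icc]; omega)]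

private lemma G2 (c : ℤ) : ∀ a : ℤ, a ≤ c + 2 →
    2 * ∑ j ∈ Finset.Icc a c, (c + 1 - j) = (c + 1 - a) * (c + 2 - a) := by
  refine Int.le_induction_down
    (motive := fun a _ => 2 * ∑ j ∈ Finset.Icc a c, (c + 1 - j) = (c + 1 - a) * (c + 2 - a)) ?_ ?_
  · show 2 * ∑ j ∈ Finset.Icc (c + 2) c, (c + 1 - j) = (c + 1 - (c + 2)) * (c + 2 - (c + 2))
    rw [Finset.Icc_eq_empty (by omega), Finset.sum_empty]
    ring
  · intro n hn ih
    show 2 * ∑ j ∈ Finset.Icc (n-1) c, (c + 1 - j) = (c + 1 - (n-1)) * (c + 2 - (n-1))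
    rcases le_or_gt n (c+1) with h|h
    · rw [sum_bot _ _ _ (by omega : n - 1 ≤ c), show n - 1 + 1 = n from by ring]
      linear_combination ih
    · rw [Finset.Icc_eq_empty (by omega), Finset.sum_empty]
      have : n = c + 2 := by omega
      subst this
      ring

private lemma G3 (c : ℤ) : ∀ a : ℤ, a ≤ c + 1 →
    3 * ∑ j ∈ Finset.Icc a c, ((c - 1 - j) * (c - j)) = (c - 1 - a) * (c - a) * (c + 1 - a) := by
  refine Int.le_induction_down
    (motive := fun a _ => 3 * ∑ j ∈ Finset.Icc a c, ((c - 1 - j) * (c - j)) = (c - 1 - a) * (c - a) * (c + 1 - a)) ?_ ?_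
  · show 3 * ∑ j ∈ Finset.Icc (c + 1) c, ((c - 1 - j) * (c - j)) = (c - 1 - (c + 1)) * (c - (c + 1)) * (c + 1 - (c + 1))
    rw [Finset.Icc_eq_empty (by omega), Finset.sum_empty]
    ring
  · intro n hn ih
    show 3 * ∑ j ∈ Finset.Icc (n-1) c, ((c - 1 - j) * (c - j)) = (c - 1 - (n-1)) * (c - (n-1)) * (c + 1 - (n-1))
    rw [sum_bot _ _ _ (by omega : n - 1 ≤ c), show n - 1 + 1 = n from by ring]
    linear_combination ih

private lemma G4 (c : ℤ) : ∀ a : ℤ, a ≤ c + 1 →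
    4 * ∑ j ∈ Finset.Icc a c, ((c - 1 - j) * (c - j) * (c + 1 - j)) = (c - 1 - a) * (c - a) * (c + 1 - a) * (c + 2 - a) := by
  refine Int.le_induction_down
    (motive := fun a _ => 4 * ∑ j ∈ Finset.Icc a c, ((c - 1 - j) * (c - j) * (c + 1 - j)) = (c - 1 - a) * (c - a) * (c + 1 - a) * (c + 2 - a)) ?_ ?_
  · show 4 * ∑ j ∈ Finset.Icc (c + 1) c, ((c - 1 - j) * (c - j) * (c + 1 - j)) = (c - 1 - (c + 1)) * (c - (c + 1)) * (c + 1 - (c + 1)) * (c + 2 - (c + 1))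
    rw [Finset.Icc_eq_empty (by omega), Finset.sum_empty]
    ring
  · intro n hn ih
    show 4 * ∑ j ∈ Finset.Icc (n-1) c, ((c - 1 - j) * (c - j) * (c + 1 - j)) = (c - 1 - (n-1)) * (c - (n-1)) * (c + 1 - (n-1)) * (c + 2 - (n-1))
    rw [sum_bot _ _ _ (by omega : n - 1 ≤ c), show n - 1 + 1 = n from by ring]
    linear_combination ih

theorem stmt_16 (n : ℤ) (hn : 0 < n) (h4 : n % 4 = 3) :
    (∑ i ∈ Finset.Icc ((n+1)/2) ((3*n-5)/4), ∑ j ∈ Finset.Icc ((3*n+3)/4) ((3*n-1)/2 - i),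
      ∑ l ∈ Finset.Icc (j+1) ((3*n-3)/2 - i), ∑ k ∈ Finset.Icc (i+1) ((3*n-1)/2 - l), (1:ℤ))
      = (n+1)*(n-3)*(n-7)*(n-11)/6144 := by
  obtain ⟨m, hm, rfl⟩ : ∃ m : ℤ, 0 ≤ m ∧ n = 4*m+3 := ⟨(n-3)/4, by omega, by omega⟩
  simp only [show ((4*m+3)+1)/2 = 2*m+2 from by omega,
    show (3*(4*m+3)-5)/4 = 3*m+1 from by omega,
    show (3*(4*m+3)+3)/4 = 3*m+3 from by omega,
    show (3*(4*m+3)-1)/2 = 6*m+4 from by omega,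
    show (3*(4*m+3)-3)/2 = 6*m+3 from by omega]
  have key : ∀ i ∈ Finset.Icc (2*m+2) (3*m+1), ∀ j ∈ Finset.Icc (3*m+3) (6*m+4-i),
      2 * ∑ l ∈ Finset.Icc (j+1) (6*m+3-i), ∑ k ∈ Finset.Icc (i+1) (6*m+4-l), (1:ℤ)
        = (6*m+3-i+1-(j+1)) * (6*m+3-i+2-(j+1)) := by
    intro i hi j hj
    simp only [Finset.mem_Icc] at hi hj
    have e : ∑ l ∈ Finset.Icc (j+1) (6*m+3-i), (∑ k ∈ Finset.Icc (i+1) (6*m+4-l), (1:ℤ))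
        = ∑ l ∈ Finset.Icc (j+1) (6*m+3-i), (6*m+3-i+1-l) := by
      refine Finset.sum_congr rfl fun l hl => ?_
      simp only [Finset.mem_Icc] at hl
      rw [G1 (i+1) (6*m+4-l) (by omega)]
      ring
    rw [e]
    exact G2 (6*m+3-i) (j+1) (by omega)
  have key3 : ∀ i ∈ Finset.Icc (2*m+2) (3*m+1),
      6 * ∑ j ∈ Finset.Icc (3*m+3) (6*m+4-i), ∑ l ∈ Finset.Icc (j+1) (6*m+3-i),
          ∑ k ∈ Finset.Icc (i+1) (6*m+4-l), (1:ℤ)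
        = (3*m-i) * (3*m+1-i) * (3*m+2-i) := by
    intro i hi
    have hi' := Finset.mem_Icc.mp hi
    have e2 : 2 * (∑ j ∈ Finset.Icc (3*m+3) (6*m+4-i), ∑ l ∈ Finset.Icc (j+1) (6*m+3-i),
          ∑ k ∈ Finset.Icc (i+1) (6*m+4-l), (1:ℤ))
        = ∑ j ∈ Finset.Icc (3*m+3) (6*m+4-i), ((6*m+4-i-1-j) * (6*m+4-i-j)) := by
      rw [Finset.mul_sum]
      exact Finset.sum_congr rfl fun j hj => by linear_combination key i hi j hj
    have h3 := G3 (6*m+4-i) (3*m+3) (by omega)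
    linear_combination 3 * e2 + h3
  have e3 : 6 * (∑ i ∈ Finset.Icc (2*m+2) (3*m+1), ∑ j ∈ Finset.Icc (3*m+3) (6*m+4-i),
        ∑ l ∈ Finset.Icc (j+1) (6*m+3-i), ∑ k ∈ Finset.Icc (i+1) (6*m+4-l), (1:ℤ))
      = ∑ i ∈ Finset.Icc (2*m+2) (3*m+1), ((3*m+1-1-i) * (3*m+1-i) * (3*m+1+1-i)) := by
    rw [Finset.mul_sum]
    exact Finset.sum_congr rfl fun i hi => by linear_combination key3 i hi
  have h4' := G4 (3*m+1) (2*m+2) (by omega)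
  have hnum : (4*m+3+1)*(4*m+3-3)*(4*m+3-7)*(4*m+3-11)
      = 6144 * (∑ i ∈ Finset.Icc (2*m+2) (3*m+1), ∑ j ∈ Finset.Icc (3*m+3) (6*m+4-i),
        ∑ l ∈ Finset.Icc (j+1) (6*m+3-i), ∑ k ∈ Finset.Icc (i+1) (6*m+4-l), (1:ℤ)) := by
    linear_combination (-1024) * e3 + (-256) * h4'
  rw [hnum]
  exact (Int.mul_ediv_cancel_left _ (by norm_num)).symm
end

section
/- For a positive integer n ≡ 1 (mod 4), the sum \sum_{i=1}^{(n-5)/4} \sum_{j=(n+3)/4}^{(n+1)/2-i} ( \sum_{k=i+1}^{(n-1)/2-j} \sum_{l=j+1}^{(n+1)/2-k} 1 + \sum_{k=i+1}^{j-1} \sum_{l=n-k+1}^{n} 1 ) equals (n+3)(n-1)(n-5)(11n+13)/6144. -/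
private lemma sum_one_Icc (a b : ℤ) (h : a ≤ b + 1) :
    ∑ l ∈ Finset.Icc a b, (1:ℤ) = b + 1 - a := by
  simp only [Finset.sum_const, Int.card_Icc, nsmul_eq_mul, mul_one]
  omega

private lemma tele (f F : ℤ → ℤ) (hF : ∀ k, F k - F (k-1) = f k) (a : ℤ) :
    ∀ b : ℤ, a - 1 ≤ b → ∑ k ∈ Finset.Icc a b, f k = F b - F (a-1) := by
  refine Int.le_induction ?_ ?_
  · rw [Finset.Icc_eq_empty (by omega), Finset.sum_empty]
    ring
  · intro b hb ih
    have hins : Finset.Icc a (b+1) = insert (b+1) (Finset.Icc a b) := by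
      ext x; simp only [Finset.mem_Icc, Finset.mem_insert]; omega
    rw [hins, Finset.sum_insert (by simp only [Finset.mem_Icc]; omega), ih]
    have h2 := hF (b+1)
    rw [show b+1-1 = b from by ring] at h2
    linarith

theorem stmt_19 (n : ℤ) (hn : 0 < n) (h4 : n % 4 = 1) :
    (∑ i ∈ Finset.Icc 1 ((n-5)/4), ∑ j ∈ Finset.Icc ((n+3)/4) ((n+1)/2 - i),
      ((∑ k ∈ Finset.Icc (i+1) ((n-1)/2 - j), ∑ l ∈ Finset.Icc (j+1) ((n+1)/2 - k), (1:ℤ)) +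
       (∑ k ∈ Finset.Icc (i+1) (j-1), ∑ l ∈ Finset.Icc (n-k+1) n, (1:ℤ))))
      = (n+3)*(n-1)*(n-5)*(11*n+13)/6144 := by
  obtain ⟨m, rfl⟩ : ∃ m, n = 4*m+1 := ⟨(n-1)/4, by omega⟩
  have hm0 : 0 ≤ m := by omega
  rw [show (4*m+1-5)/4 = m-1 from by omega, show (4*m+1+3)/4 = m+1 from by omega,
      show (4*m+1+1)/2 = 2*m+1 from by omega, show (4*m+1-1)/2 = 2*m from by omega]
  rcases eq_or_lt_of_le hm0 with h0 | hm1
  · -- m = 0 case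
    subst h0
    rw [Finset.Icc_eq_empty (by norm_num), Finset.sum_empty]
    norm_num
  · -- m ≥ 1
    have key : ∀ i ∈ Finset.Icc (1:ℤ) (m-1), ∀ j ∈ Finset.Icc (m+1) (2*m+1-i),
        2 * ((∑ k ∈ Finset.Icc (i+1) (2*m - j), ∑ l ∈ Finset.Icc (j+1) (2*m+1-k), (1:ℤ)) +
             ∑ k ∈ Finset.Icc (i+1) (j-1), ∑ l ∈ Finset.Icc (4*m+1-k+1) (4*m+1), (1:ℤ))
        = (2*m-i-j)*(2*m+1-i-j) + (j*(j-1) - i*(i+1)) := by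
      intro i hi j hj
      rw [Finset.mem_Icc] at hi hj
      have hS1 : ∑ k ∈ Finset.Icc (i+1) (2*m-j), ∑ l ∈ Finset.Icc (j+1) (2*m+1-k), (1:ℤ)
          = ∑ k ∈ Finset.Icc (i+1) (2*m-j), (2*(2*m+1-j-k))/2 := by
        apply Finset.sum_congr rfl
        intro k hk
        rw [Finset.mem_Icc] at hk
        rw [sum_one_Icc _ _ (by omega)]
        omega
      have hS2 : ∑ k ∈ Finset.Icc (i+1) (j-1), ∑ l ∈ Finset.Icc (4*m+1-k+1) (4*m+1), (1:ℤ)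
          = ∑ k ∈ Finset.Icc (i+1) (j-1), k := by
        apply Finset.sum_congr rfl
        intro k hk
        rw [Finset.mem_Icc] at hk
        rw [sum_one_Icc _ _ (by omega)]
        ring
      have hS2' : 2 * ∑ k ∈ Finset.Icc (i+1) (j-1), k = j*(j-1) - i*(i+1) := by
        rw [Finset.mul_sum,
          tele (fun k => 2*k) (fun k => k*(k+1)) (fun k => by ring) (i+1) (j-1) (by omega)]
        ring
      have hS1' : 2 * ∑ k ∈ Finset.Icc (i+1) (2*m-j), (2*(2*m+1-j-k))/2
          = (2*m-i-j)*(2*m+1-i-j) := by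
        have hcong : ∑ k ∈ Finset.Icc (i+1) (2*m-j), (2*(2*m+1-j-k))/2
            = ∑ k ∈ Finset.Icc (i+1) (2*m-j), (2*m+1-j-k) := by
          apply Finset.sum_congr rfl
          intro k hk
          omega
        rw [hcong]
        rcases le_or_gt (i+1) (2*m-j+1) with h | h
        · rw [Finset.mul_sum]
          have hc2 : ∀ k ∈ Finset.Icc (i+1) (2*m-j), 2*(2*m+1-j-k) = 2*(2*m+1-j-k) :=
            fun k _ => rfl
          rw [show (∑ k ∈ Finset.Icc (i+1) (2*m-j), 2*(2*m+1-j-k))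
              = ∑ k ∈ Finset.Icc (i+1) (2*m-j), (fun k => 2*(2*m+1-j-k)) k from rfl,
            tele (fun k => 2*(2*m+1-j-k)) (fun k => -((2*m-j-k)*(2*m+1-j-k)))
              (fun k => by ring) (i+1) (2*m-j) (by omega)]
          ring
        · have hj' : j = 2*m+1-i := by omega
          rw [Finset.Icc_eq_empty (by omega), Finset.sum_empty, mul_zero, hj']
          ring
      rw [mul_add, hS1, hS2, hS1', hS2']
    have keyj : ∀ i ∈ Finset.Icc (1:ℤ) (m-1),
        24 * ∑ j ∈ Finset.Icc (m+1) (2*m+1-i),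
          ((∑ k ∈ Finset.Icc (i+1) (2*m - j), ∑ l ∈ Finset.Icc (j+1) (2*m+1-k), (1:ℤ)) +
           ∑ k ∈ Finset.Icc (i+1) (j-1), ∑ l ∈ Finset.Icc (4*m+1-k+1) (4*m+1), (1:ℤ))
        = 4*((2*(2*m+1-i)^3 + 3*i*(2*m+1-i)^2 - 6*m*(2*m+1-i)^2 + 12*m^2*(2*m+1-i)
            - 12*m*i*(2*m+1-i) - 3*i*(2*m+1-i) - 2*(2*m+1-i))
          - (2*m^3 + 3*i*m^2 - 6*m*m^2 + 12*m^2*m - 12*m*i*m - 3*i*m - 2*m)) := by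
      intro i hi
      have hi' := hi
      rw [Finset.mem_Icc] at hi'
      rw [show (24:ℤ) = 4 * 6 from by norm_num, mul_assoc, Finset.mul_sum]
      have hcong : ∑ j ∈ Finset.Icc (m+1) (2*m+1-i),
          6 * ((∑ k ∈ Finset.Icc (i+1) (2*m - j), ∑ l ∈ Finset.Icc (j+1) (2*m+1-k), (1:ℤ)) +
           ∑ k ∈ Finset.Icc (i+1) (j-1), ∑ l ∈ Finset.Icc (4*m+1-k+1) (4*m+1), (1:ℤ))
          = ∑ j ∈ Finset.Icc (m+1) (2*m+1-i),
            3*((2*m-i-j)*(2*m+1-i-j) + (j*(j-1) - i*(i+1))) := by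
        apply Finset.sum_congr rfl
        intro j hj
        have := key i hi j hj
        linarith
      rw [hcong,
        tele (fun j => 3*((2*m-i-j)*(2*m+1-i-j) + (j*(j-1) - i*(i+1))))
          (fun j => 2*j^3 + 3*i*j^2 - 6*m*j^2 + 12*m^2*j - 12*m*i*j - 3*i*j - 2*j)
          (fun j => by ring) (m+1) (2*m+1-i) (by omega)]
      ring
    have keyi : 24 * ∑ i ∈ Finset.Icc (1:ℤ) (m-1),
        ∑ j ∈ Finset.Icc (m+1) (2*m+1-i),
          ((∑ k ∈ Finset.Icc (i+1) (2*m - j), ∑ l ∈ Finset.Icc (j+1) (2*m+1-k), (1:ℤ)) +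
           ∑ k ∈ Finset.Icc (i+1) (j-1), ∑ l ∈ Finset.Icc (4*m+1-k+1) (4*m+1), (1:ℤ))
        = ((m-1)^4 + 6*(m-1)^3 - (m-1)^2 - 6*(m-1) + 8*m*(m-1)^3 - 18*m*(m-1)^2
            - 10*m*(m-1) - 30*m^2*(m-1)^2 + 18*m^2*(m-1) + 32*m^3*(m-1)) := by
      rw [Finset.mul_sum]
      have hcong : ∑ i ∈ Finset.Icc (1:ℤ) (m-1),
          24 * ∑ j ∈ Finset.Icc (m+1) (2*m+1-i),
          ((∑ k ∈ Finset.Icc (i+1) (2*m - j), ∑ l ∈ Finset.Icc (j+1) (2*m+1-k), (1:ℤ)) +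
           ∑ k ∈ Finset.Icc (i+1) (j-1), ∑ l ∈ Finset.Icc (4*m+1-k+1) (4*m+1), (1:ℤ))
          = ∑ i ∈ Finset.Icc (1:ℤ) (m-1),
            4*((2*(2*m+1-i)^3 + 3*i*(2*m+1-i)^2 - 6*m*(2*m+1-i)^2 + 12*m^2*(2*m+1-i)
              - 12*m*i*(2*m+1-i) - 3*i*(2*m+1-i) - 2*(2*m+1-i))
            - (2*m^3 + 3*i*m^2 - 6*m*m^2 + 12*m^2*m - 12*m*i*m - 3*i*m - 2*m)) :=
        Finset.sum_congr rfl keyj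
      rw [hcong,
        tele (fun i => 4*((2*(2*m+1-i)^3 + 3*i*(2*m+1-i)^2 - 6*m*(2*m+1-i)^2
              + 12*m^2*(2*m+1-i) - 12*m*i*(2*m+1-i) - 3*i*(2*m+1-i) - 2*(2*m+1-i))
            - (2*m^3 + 3*i*m^2 - 6*m*m^2 + 12*m^2*m - 12*m*i*m - 3*i*m - 2*m)))
          (fun i => i^4 + 6*i^3 - i^2 - 6*i + 8*m*i^3 - 18*m*i^2 - 10*m*i
              - 30*m^2*i^2 + 18*m^2*i + 32*m^3*i)
          (fun i => by ring) 1 (m-1) (by omega)]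
      ring
    have hL : 6144 * ∑ i ∈ Finset.Icc (1:ℤ) (m-1),
        ∑ j ∈ Finset.Icc (m+1) (2*m+1-i),
          ((∑ k ∈ Finset.Icc (i+1) (2*m - j), ∑ l ∈ Finset.Icc (j+1) (2*m+1-k), (1:ℤ)) +
           ∑ k ∈ Finset.Icc (i+1) (j-1), ∑ l ∈ Finset.Icc (4*m+1-k+1) (4*m+1), (1:ℤ))
        = (4*m+1+3)*(4*m+1-1)*(4*m+1-5)*(11*(4*m+1)+13) := by
      have h256 : (6144:ℤ) = 256 * 24 := by norm_num
      rw [h256, mul_assoc, keyi]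
      ring
    omega
end
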